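/- For every functor G : C ⥤ D, the category of instances of G is equivalent to the functor category Coll(K_G) ⥤ Type, where K_G is the profunctor from C to D defined by K_G(c,d) = Hom_D(G.obj c, d) with actions given by composition in D, and Coll(K_G) is its collage. -/

import Mathlib

open CategoryTheory Opposite

universe u

variable {C D : Type u} [Category.{u} C] [Category.{u} D]

/-- The objects of the collage of a profunctor `K` from `C` to `D`: the disjoint union of the
objects of `C` and of `D`. -/
def Collage (K : Cᵒᵖ × D ⥤ Type u) : Type u := C ⊕ D

/-- The hom-sets of the collage of `K`. -/
def CollageHom (K : Cᵒᵖ × D ⥤ Type u) : Collage K → Collage K → Type u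
  | Sum.inl c, Sum.inl c' => c ⟶ c'
  | Sum.inl c, Sum.inr d => K.obj (op c, d)
  | Sum.inr _, Sum.inl _ => PEmpty
  | Sum.inr d, Sum.inr d' => d ⟶ d'

/-- Identities in the collage. -/
def collageId (K : Cᵒᵖ × D ⥤ Type u) : ∀ x : Collage K, CollageHom K x x
  | Sum.inl c => (𝟙 c : c ⟶ c)
  | Sum.inr d => (𝟙 d : d ⟶ d)

/-- Composition in the collage, given by composition in `C` and `D` and the two-sided action
of `C` and `D` on `K`. -/
def collageComp (K : Cᵒᵖ × D ⥤ Type u) :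
    ∀ {x y z : Collage K}, CollageHom K x y → CollageHom K y z → CollageHom K x z
  | Sum.inl _, Sum.inl _, Sum.inl _, f, g => (f ≫ g : _ ⟶ _)
  | Sum.inl c, Sum.inl c', Sum.inr d, f, k =>
      (K.map ((Quiver.Hom.op (f : c ⟶ c'), 𝟙 d) : (op c', d) ⟶ (op c, d)) k : K.obj (op c, d))
  | Sum.inl c, Sum.inr d, Sum.inr d', k, g =>
      (K.map ((𝟙 (op c), (g : d ⟶ d')) : (op c, d) ⟶ (op c, d')) k : K.obj (op c, d'))
  | Sum.inl _, Sum.inr _, Sum.inl _, _, g => (g : PEmpty).elim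
  | Sum.inr _, Sum.inl _, _, f, _ => (f : PEmpty).elim
  | Sum.inr _, Sum.inr _, Sum.inl _, _, g => (g : PEmpty).elim
  | Sum.inr _, Sum.inr _, Sum.inr _, f, g => (f ≫ g : _ ⟶ _)

theorem collage_id_comp (K : Cᵒᵖ × D ⥤ Type u) :
    ∀ {x y : Collage K} (f : CollageHom K x y),
      collageComp K (collageId K x) f = f
  | Sum.inl _, Sum.inl _, f => Category.id_comp f
  | Sum.inl c, Sum.inr d, k => K.map_id_apply (op c, d) k
  | Sum.inr _, Sum.inl _, f => (f : PEmpty).elim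
  | Sum.inr _, Sum.inr _, f => Category.id_comp f

theorem collage_comp_id (K : Cᵒᵖ × D ⥤ Type u) :
    ∀ {x y : Collage K} (f : CollageHom K x y),
      collageComp K f (collageId K y) = f
  | Sum.inl _, Sum.inl _, f => Category.comp_id f
  | Sum.inl c, Sum.inr d, k => K.map_id_apply (op c, d) k
  | Sum.inr _, Sum.inl _, f => (f : PEmpty).elim
  | Sum.inr _, Sum.inr _, f => Category.comp_id f

theorem collage_assoc (K : Cᵒᵖ × D ⥤ Type u) :
    ∀ {w x y z : Collage K} (f : CollageHom K w x) (g : CollageHom K x y)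
      (h : CollageHom K y z),
      collageComp K (collageComp K f g) h = collageComp K f (collageComp K g h)
  | Sum.inl _, Sum.inl _, Sum.inl _, Sum.inl _, f, g, h => Category.assoc f g h
  | Sum.inl c₁, Sum.inl c₂, Sum.inl c₃, Sum.inr d, f, g, k => by
      show K.map ((Quiver.Hom.op ((f : c₁ ⟶ c₂) ≫ (g : c₂ ⟶ c₃)), 𝟙 d) :
            (op c₃, d) ⟶ (op c₁, d)) k =
        K.map ((Quiver.Hom.op (f : c₁ ⟶ c₂), 𝟙 d) : (op c₂, d) ⟶ (op c₁, d))
          (K.map ((Quiver.Hom.op (g : c₂ ⟶ c₃), 𝟙 d) : (op c₃, d) ⟶ (op c₂, d)) k)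
      refine (congrArg (fun φ : (op c₃, d) ⟶ (op c₁, d) => K.map φ k) ?_).trans
        (K.map_comp_apply _ _ k)
      apply Prod.ext
      · exact op_comp
      · exact (Category.comp_id _).symm
  | Sum.inl _, Sum.inl _, Sum.inr _, Sum.inl _, _, _, h => (h : PEmpty).elim
  | Sum.inl c₁, Sum.inl c₂, Sum.inr d₁, Sum.inr d₂, f, k, g => by
      show K.map ((𝟙 (op c₁), (g : d₁ ⟶ d₂)) : (op c₁, d₁) ⟶ (op c₁, d₂))
          (K.map ((Quiver.Hom.op (f : c₁ ⟶ c₂), 𝟙 d₁) : (op c₂, d₁) ⟶ (op c₁, d₁)) k) =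
        K.map ((Quiver.Hom.op (f : c₁ ⟶ c₂), 𝟙 d₂) : (op c₂, d₂) ⟶ (op c₁, d₂))
          (K.map ((𝟙 (op c₂), (g : d₁ ⟶ d₂)) : (op c₂, d₁) ⟶ (op c₂, d₂)) k)
      refine (K.map_comp_apply _ _ k).symm.trans
        ((congrArg (fun φ : (op c₂, d₁) ⟶ (op c₁, d₂) => K.map φ k) ?_).trans
          (K.map_comp_apply _ _ k))
      apply Prod.ext
      · simp
      · exact (Category.id_comp _).trans (Category.comp_id _).symm
  | Sum.inl _, Sum.inr _, Sum.inl _, _, _, g, _ => (g : PEmpty).elim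
  | Sum.inl _, Sum.inr _, Sum.inr _, Sum.inl _, _, _, h => (h : PEmpty).elim
  | Sum.inl c, Sum.inr d₁, Sum.inr d₂, Sum.inr d₃, k, g, h => by
      show K.map ((𝟙 (op c), (h : d₂ ⟶ d₃)) : (op c, d₂) ⟶ (op c, d₃))
          (K.map ((𝟙 (op c), (g : d₁ ⟶ d₂)) : (op c, d₁) ⟶ (op c, d₂)) k) =
        K.map ((𝟙 (op c), (g : d₁ ⟶ d₂) ≫ (h : d₂ ⟶ d₃)) : (op c, d₁) ⟶ (op c, d₃)) k
      refine (K.map_comp_apply _ _ k).symm.trans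
        (congrArg (fun φ : (op c, d₁) ⟶ (op c, d₃) => K.map φ k) ?_)
      apply Prod.ext
      · exact Category.id_comp _
      · rfl
  | Sum.inr _, Sum.inl _, _, _, f, _, _ => (f : PEmpty).elim
  | Sum.inr _, Sum.inr _, Sum.inl _, _, _, g, _ => (g : PEmpty).elim
  | Sum.inr _, Sum.inr _, Sum.inr _, Sum.inl _, _, _, h => (h : PEmpty).elim
  | Sum.inr _, Sum.inr _, Sum.inr _, Sum.inr _, f, g, h => Category.assoc f g h

/-- The collage of a profunctor `K` from `C` to `D`. -/
instance collageCategory (K : Cᵒᵖ × D ⥤ Type u) : Category.{u} (Collage K) where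
  Hom x y := CollageHom K x y
  id x := collageId K x
  comp f g := collageComp K f g
  id_comp f := collage_id_comp K f
  comp_id f := collage_comp_id K f
  assoc f g h := collage_assoc K f g h

/-- An instance of a functor `G : C ⥤ D`: copresheaves `X` on `C` and `Y` on `D` together with
a natural transformation `X ⟶ G ⋙ Y`. -/
structure FunctorInstance {C D : Type u} [Category.{u} C] [Category.{u} D] (G : C ⥤ D) where
  X : C ⥤ Type u
  Y : D ⥤ Type u
  φ : X ⟶ G ⋙ Y

/-- The category of instances of a functor `G`. -/
instance {C D : Type u} [Category.{u} C] [Category.{u} D] (G : C ⥤ D) :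
    Category (FunctorInstance G) where
  Hom I J := { μν : (I.X ⟶ J.X) × (I.Y ⟶ J.Y) //
      I.φ ≫ Functor.whiskerLeft G μν.2 = μν.1 ≫ J.φ }
  id I := ⟨(𝟙 I.X, 𝟙 I.Y), by simp⟩
  comp {I J L} f g := ⟨(f.1.1 ≫ g.1.1, f.1.2 ≫ g.1.2), by
    rw [Functor.whiskerLeft_comp, ← Category.assoc, f.2, Category.assoc, g.2, ← Category.assoc]⟩
  id_comp f := rfl
  comp_id f := rfl
  assoc f g h := rfl

/-- The hom profunctor `K_G(c, d) = Hom_D(G.obj c, d)` associated to a functor `G : C ⥤ D`,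
with actions given by composition in `D`. -/
def homProfunctor {C D : Type u} [Category.{u} C] [Category.{u} D] (G : C ⥤ D) :
    Cᵒᵖ × D ⥤ Type u :=
  G.op.prod (𝟭 D) ⋙ Functor.hom D

section Aux

variable {C D : Type u} [Category.{u} C] [Category.{u} D] (G : C ⥤ D)

/-- Left inclusion of objects into the collage. -/
abbrev cl (G : C ⥤ D) (c : C) : Collage (homProfunctor G) := Sum.inl c

/-- Right inclusion of objects into the collage. -/
abbrev cr (G : C ⥤ D) (d : D) : Collage (homProfunctor G) := Sum.inr d

/-- An instance of `G` gives a functor on the collage. -/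
def instToColl (I : FunctorInstance G) : Collage (homProfunctor G) ⥤ Type u where
  obj x := match x with
    | Sum.inl c => I.X.obj c
    | Sum.inr d => I.Y.obj d
  map {x y} f := match x, y, f with
    | Sum.inl _, Sum.inl _, f => I.X.map f
    | Sum.inl c, Sum.inr _, k => TypeCat.ofHom (fun a => I.Y.map (k : G.obj c ⟶ _) (I.φ.app c a))
    | Sum.inr _, Sum.inl _, f => (f : PEmpty).elim
    | Sum.inr _, Sum.inr _, f => I.Y.map f
  map_id x := match x with
    | Sum.inl c => I.X.map_id c
    | Sum.inr d => I.Y.map_id d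
  map_comp {x y z} f g := match x, y, z, f, g with
    | Sum.inl _, Sum.inl _, Sum.inl _, f, g => I.X.map_comp f g
    | Sum.inl c, Sum.inl c', Sum.inr d, f, k => by
        ext a
        show I.Y.map (G.map f ≫ (k : G.obj c' ⟶ d) ≫ 𝟙 d) (I.φ.app c a)
          = I.Y.map (k : G.obj c' ⟶ d) (I.φ.app c' (I.X.map f a))
        rw [NatTrans.naturality_apply I.φ f a]
        show I.Y.map (G.map f ≫ (k : G.obj c' ⟶ d) ≫ 𝟙 d) (I.φ.app c a)
          = I.Y.map (k : G.obj c' ⟶ d) (I.Y.map (G.map f) (I.φ.app c a))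
        refine Eq.trans ?_ (FunctorToTypes.map_comp_apply I.Y (G.map (f : c ⟶ c')) (k : G.obj c' ⟶ d) (I.φ.app c a))
        refine types_congr_hom (congrArg I.Y.map ?_) (I.φ.app c a)
        exact congrArg (G.map (f : c ⟶ c') ≫ ·) (@Category.comp_id D _ _ _ (k : G.obj c' ⟶ d))
    | Sum.inl _, Sum.inr _, Sum.inl _, _, g => (g : PEmpty).elim
    | Sum.inl c, Sum.inr d, Sum.inr d', k, g => by
        ext a
        show I.Y.map (G.map (𝟙 c) ≫ (k : G.obj c ⟶ d) ≫ (g : d ⟶ d')) (I.φ.app c a)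
          = I.Y.map g (I.Y.map k (I.φ.app c a))
        refine Eq.trans ?_ (FunctorToTypes.map_comp_apply I.Y (k : G.obj c ⟶ d) (g : d ⟶ d') (I.φ.app c a))
        refine types_congr_hom (congrArg I.Y.map ?_) (I.φ.app c a)
        simp
    | Sum.inr _, Sum.inl _, _, f, _ => (f : PEmpty).elim
    | Sum.inr _, Sum.inr _, Sum.inl _, _, g => (g : PEmpty).elim
    | Sum.inr _, Sum.inr _, Sum.inr _, f, g => I.Y.map_comp f g

/-- A functor on the collage gives an instance of `G`. -/
def collToInst (P : Collage (homProfunctor G) ⥤ Type u) : FunctorInstance G where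
  X :=
    { obj := fun c => P.obj (Sum.inl c)
      map := fun {c c'} f => P.map (show cl G c ⟶ cl G c' from f)
      map_id := fun c => P.map_id (Sum.inl c)
      map_comp := fun f g => P.map_comp
        (show cl G _ ⟶ cl G _ from f) (show cl G _ ⟶ cl G _ from g) }
  Y :=
    { obj := fun d => P.obj (Sum.inr d)
      map := fun {d d'} g => P.map (show cr G d ⟶ cr G d' from g)
      map_id := fun d => P.map_id (Sum.inr d)
      map_comp := fun f g => P.map_comp
        (show cr G _ ⟶ cr G _ from f) (show cr G _ ⟶ cr G _ from g) }
  φ :=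
    { app := fun c => P.map (show cl G c ⟶ cr G (G.obj c) from 𝟙 (G.obj c))
      naturality := fun c c' f => by
        ext a
        show P.map (show cl G c' ⟶ cr G (G.obj c') from 𝟙 _)
            (P.map (show cl G c ⟶ cl G c' from f) a)
          = P.map (show cr G (G.obj c) ⟶ cr G (G.obj c') from G.map f)
            (P.map (show cl G c ⟶ cr G (G.obj c) from 𝟙 _) a)
        rw [← FunctorToTypes.map_comp_apply, ← FunctorToTypes.map_comp_apply]
        refine types_congr_hom (congrArg P.map ?_) a
        show G.map f ≫ 𝟙 _ ≫ 𝟙 _ = G.map (𝟙 c) ≫ 𝟙 _ ≫ G.map f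
        simp }

/-- The forward functor of the equivalence. -/
def instToCollFunctor : FunctorInstance G ⥤ (Collage (homProfunctor G) ⥤ Type u) where
  obj I := instToColl G I
  map {I J} η :=
    { app := fun x => match x with
        | Sum.inl c => η.1.1.app c
        | Sum.inr d => η.1.2.app d
      naturality := fun x y f => match x, y, f with
        | Sum.inl _, Sum.inl _, f => η.1.1.naturality f
        | Sum.inl c, Sum.inr d, k => by
            ext a
            show η.1.2.app d (I.Y.map (k : G.obj c ⟶ d) (I.φ.app c a))
              = J.Y.map (k : G.obj c ⟶ d) (J.φ.app c (η.1.1.app c a))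
            have h := types_congr_hom (congrArg (fun t => NatTrans.app t c) η.2) a
            have h' : J.φ.app c (η.1.1.app c a) = η.1.2.app (G.obj c) (I.φ.app c a) :=
              h.symm
            rw [h']
            exact types_congr_hom (η.1.2.naturality (k : G.obj c ⟶ d)) (I.φ.app c a)
        | Sum.inr _, Sum.inl _, f => (f : PEmpty).elim
        | Sum.inr _, Sum.inr _, f => η.1.2.naturality f }
  map_id I := by
    apply NatTrans.ext
    funext x
    cases x <;> rfl
  map_comp f g := by
    apply NatTrans.ext
    funext x
    cases x <;> rfl

/-- The inverse functor of the equivalence. -/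
def collToInstFunctor : (Collage (homProfunctor G) ⥤ Type u) ⥤ FunctorInstance G where
  obj P := collToInst G P
  map {P Q} η :=
    ⟨({ app := fun c => η.app (Sum.inl c)
        naturality := fun c c' f => η.naturality (show cl G c ⟶ cl G c' from f) },
      { app := fun d => η.app (Sum.inr d)
        naturality := fun d d' g => η.naturality (show cr G d ⟶ cr G d' from g) }), by
      apply NatTrans.ext
      funext c
      exact η.naturality (show cl G c ⟶ cr G (G.obj c) from 𝟙 (G.obj c))⟩
  map_id P := rfl
  map_comp f g := rfl

end Aux

/-- For every functor `G : C ⥤ D`, the category of instances of `G` is equivalent to the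
category of functors from the collage of the profunctor `K_G = Hom_D(G.obj -, -)` to `Type`. -/
theorem functorInstances_equiv_collageFunctors {C D : Type u} [Category.{u} C]
    [Category.{u} D] (G : C ⥤ D) :
    Nonempty (FunctorInstance G ≌ (Collage (homProfunctor G) ⥤ Type u)) := by
  refine ⟨CategoryTheory.Equivalence.mk (instToCollFunctor G) (collToInstFunctor G) ?_ ?_⟩
  · -- unit : 𝟭 ≅ instToCollFunctor ⋙ collToInstFunctor
    refine NatIso.ofComponents (fun I => ?_) (fun {I J} η => ?_)
    · refine ⟨⟨(𝟙 I.X, 𝟙 I.Y), ?_⟩, ⟨(𝟙 _, 𝟙 _), ?_⟩, ?_, ?_⟩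
      · apply NatTrans.ext
        funext c
        ext a
        show I.φ.app c a = I.Y.map (𝟙 (G.obj c)) (I.φ.app c a)
        rw [I.Y.map_id]
        rfl
      · apply NatTrans.ext
        funext c
        ext a
        show I.Y.map (𝟙 (G.obj c)) (I.φ.app c a) = I.φ.app c a
        rw [I.Y.map_id]
        rfl
      · exact Subtype.ext rfl
      · exact Subtype.ext rfl
    · exact Subtype.ext rfl
  · -- counit : collToInstFunctor ⋙ instToCollFunctor ≅ 𝟭
    refine NatIso.ofComponents (fun P => ?_) (fun {P Q} η => ?_)
    · refine NatIso.ofComponents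
        (fun x => match x with
          | Sum.inl c => Iso.refl (P.obj (Sum.inl c))
          | Sum.inr d => Iso.refl (P.obj (Sum.inr d)))
        (fun {x y} f => ?_)
      match x, y, f with
      | Sum.inl _, Sum.inl _, f => rfl
      | Sum.inl c, Sum.inr d, k =>
        ext a
        show P.map (show cr G (G.obj c) ⟶ cr G d from (k : G.obj c ⟶ d))
            (P.map (show cl G c ⟶ cr G (G.obj c) from 𝟙 (G.obj c)) a) = P.map k a
        refine (FunctorToTypes.map_comp_apply P (show cl G c ⟶ cr G (G.obj c) from 𝟙 (G.obj c)) (show cr G (G.obj c) ⟶ cr G d from (k : G.obj c ⟶ d)) a).symm.trans ?_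
        refine types_congr_hom (congrArg P.map ?_) a
        show G.map (𝟙 c) ≫ 𝟙 _ ≫ (k : G.obj c ⟶ d) = k
        simp
        exact @Category.id_comp D _ (G.obj c) d k
      | Sum.inr _, Sum.inl _, f => exact (f : PEmpty).elim
      | Sum.inr _, Sum.inr _, f => rfl
    · apply NatTrans.ext
      funext x
      cases x <;> rfl
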